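/- Let (M, b) be a lattice and x ∈ M \ ker(b); let s = s_b(x) be the scale of x and write b(x, x) = s·c0 with c0 ∈ ℤ. Then the scale of x in (M, m^+_x(b)) equals |s + c0| and the scale of x in (M, m^−_x(b)) equals |s − c0| (with the convention that the scale is 0 when x lies in the kernel of the form). -/
import Mathlib


/-- `s` is the scale of `x` with respect to the bilinear form `b`: if `x` lies in the
kernel of `b` then `s = 0`; otherwise `s` is the largest positive integer dividing
`b(x, m)` for all `m`. -/
def IsScale {M : Type*} (b : M → M → ℤ) (x : M) (s : ℤ) : Prop :=
  (s = 0 ∧ ∀ m, b x m = 0) ∨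
  (0 < s ∧ (∀ m, s ∣ b x m) ∧ ∀ t : ℤ, 0 < t → (∀ m, t ∣ b x m) → t ≤ s)

lemma isScale_aux {M : Type*} (c : M → M → ℤ) (bx : M → ℤ) (x : M) (s d : ℤ)
    (hs0 : 0 < s) (hdvd : ∀ m, s ∣ bx m)
    (m1 : M) (hq1 : bx m1 / s = 1 ∨ bx m1 / s = -1)
    (hc : ∀ β, c x β = d * (bx β / s)) :
    IsScale c x |d| := by
  rcases eq_or_ne d 0 with hd | hd
  · left
    refine ⟨by simp [hd], fun m => by simp [hc m, hd]⟩
  · right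
    refine ⟨abs_pos.2 hd, fun m => ?_, fun t ht htdvd => ?_⟩
    · rw [hc m]
      exact (abs_dvd _ _).2 (Dvd.intro _ rfl)
    · have h1 : t ∣ c x m1 := htdvd m1
      rw [hc m1] at h1
      have h2 : t ∣ d := by
        rcases hq1 with h | h <;> rw [h] at h1 <;> simpa using h1
      exact Int.le_of_dvd (abs_pos.2 hd) ((dvd_abs t d).2 h2)

theorem scale_of_modification
    {M : Type*} [AddCommGroup M] [Module.Free ℤ M] [Module.Finite ℤ M]
    (b : M →+ M →+ ℤ) (hbsymm : ∀ x y, b x y = b y x)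
    (x : M) (hx : ¬ ∀ m, b x m = 0)
    (s c0 : ℤ)
    (hs : IsScale (fun m n => b m n) x s)
    (hc0 : b x x = s * c0) :
    IsScale (fun α β => b α β + b x α / s * (b x β / s)) x |s + c0| ∧
    IsScale (fun α β => b α β - b x α / s * (b x β / s)) x |s - c0| := by
  -- extract the positive case of hs
  obtain ⟨hs0, hdvd, hmax⟩ : 0 < s ∧ (∀ m, s ∣ b x m) ∧
      ∀ t : ℤ, 0 < t → (∀ m, t ∣ b x m) → t ≤ s := by
    rcases hs with ⟨_, h⟩ | h
    · exact absurd h hx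
    · exact h
  have hsne : s ≠ 0 := ne_of_gt hs0
  -- the range of `b x` is a cyclic subgroup of ℤ
  obtain ⟨g, hg⟩ := Int.subgroup_cyclic (b x).range
  have hgmem : ∀ m : M, b x m ∈ AddSubgroup.closure ({g} : Set ℤ) := by
    intro m; rw [← hg]; exact ⟨m, rfl⟩
  have hgdvd : ∀ m : M, g ∣ b x m := by
    intro m
    have := hgmem m
    rw [AddSubgroup.mem_closure_singleton] at this
    obtain ⟨k, hk⟩ := this
    exact ⟨k, by rw [← hk]; simp [zsmul_eq_mul, mul_comm]⟩
  have hgne : g ≠ 0 := by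
    intro h0
    apply hx
    intro m
    simpa [h0] using hgdvd m
  obtain ⟨m1, hm1⟩ : ∃ m1, b x m1 = g := by
    have : g ∈ (b x).range := by
      rw [hg, AddSubgroup.mem_closure_singleton]; exact ⟨1, one_zsmul g⟩
    exact this
  -- |g| = s
  have hle : |g| ≤ s := hmax |g| (abs_pos.2 hgne) (fun m => (abs_dvd _ _).2 (hgdvd m))
  have hsg : s ∣ g := by rw [← hm1]; exact hdvd m1
  have hge : s ≤ |g| := Int.le_of_dvd (abs_pos.2 hgne) ((dvd_abs s g).2 hsg)
  have habs : |g| = s := le_antisymm hle hge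
  have hq1 : b x m1 / s = 1 ∨ b x m1 / s = -1 := by
    rcases abs_choice g with h | h
    · left; rw [hm1, ← h, habs, Int.ediv_self hsne]
    · right
      rw [hm1]
      have hgs : g = -s := by rw [← habs, h, neg_neg]
      rw [hgs, show -s = (-1) * s by ring, Int.mul_ediv_cancel _ hsne]
  have hxx : b x x / s = c0 := by rw [hc0, Int.mul_ediv_cancel_left _ hsne]
  have hmul : ∀ β, s * (b x β / s) = b x β := fun β => Int.mul_ediv_cancel' (hdvd β)
  constructor
  · apply isScale_aux _ (fun m => b x m) x s (s + c0) hs0 hdvd m1 hq1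
    intro β
    simp only [hxx]
    rw [add_mul, hmul β]

  · apply isScale_aux _ (fun m => b x m) x s (s - c0) hs0 hdvd m1 hq1
    intro β
    simp only [hxx]
    rw [sub_mul, hmul β]
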